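/- Consider decentralized gradient descent x_i(t+1) = ∑_j w_{ij}x_j(t) - α(t)∇f_i(x_i(t)) with doubly stochastic W, each f_i L-smooth, and total cost f = (1/m)∑f_i that is μ-strongly convex with minimizer x*. If α(t) ≤ 2/(μ+L), then the averages x̄(t) = (1/m)∑_i x_i(t) satisfy ‖x̄(t+1) - x*‖ ≤ (1 - ηα(t))‖x̄(t) - x*‖ + (Lα(t)/√m)·(∑_i ‖x_i(t) - x̄(t)‖²)^{1/2}, where η = μL/(μ+L). -/

import Mathlib

section Helpers

variable {E : Type*} [NormedAddCommGroup E] [InnerProductSpace ℝ E]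

lemma my_mono (μ : ℝ) (F : E → ℝ) (G : E → E)
    (hsc : ∀ x y, F x + (inner ℝ (G x) (y - x) : ℝ) + μ / 2 * ‖y - x‖ ^ 2 ≤ F y) :
    ∀ x y : E, μ * ‖y - x‖ ^ 2 ≤ (inner ℝ (G y - G x) (y - x) : ℝ) := by
  intro x y
  have h1 := hsc x y
  have h2 := hsc y x
  have e : (inner ℝ (G y) (x - y) : ℝ) = -(inner ℝ (G y) (y - x) : ℝ) := by
    rw [show x - y = -(y-x) by abel, inner_neg_right]
  rw [e, norm_sub_rev x y] at h2
  have e2 : (inner ℝ (G y - G x) (y - x) : ℝ)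
      = (inner ℝ (G y) (y - x) : ℝ) - (inner ℝ (G x) (y - x) : ℝ) := inner_sub_left _ _ _
  linarith
lemma my_hasFDerivAt (L : ℝ) (hL : 0 ≤ L) (F : E → ℝ) (G : E → E)
    (hlow : ∀ x y, F x + (inner ℝ (G x) (y - x) : ℝ) ≤ F y)
    (hup : ∀ x y, F y ≤ F x + (inner ℝ (G x) (y - x) : ℝ) + L * ‖y - x‖ ^ 2) :
    ∀ x, HasFDerivAt F (innerSL ℝ (G x)) x := by
  intro x
  rw [hasFDerivAt_iff_isLittleO_nhds_zero]
  have hb : ∀ h : E, ‖F (x + h) - F x - (innerSL ℝ (G x)) h‖ ≤ L * ‖h‖ ^ 2 := by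
    intro h
    have h1 := hlow x (x + h)
    have h2 := hup x (x + h)
    simp only [add_sub_cancel_left] at h1 h2
    rw [Real.norm_eq_abs, abs_le]
    have hnn : 0 ≤ L * ‖h‖ ^ 2 := mul_nonneg hL (sq_nonneg _)
    constructor
    · simp only [innerSL_apply_apply]; linarith
    · simp only [innerSL_apply_apply]; linarith
  have h2 : (fun h : E => F (x + h) - F x - (innerSL ℝ (G x)) h) =O[nhds 0] (fun h => ‖h‖ ^ 2) := by
    apply Asymptotics.IsBigO.of_bound L
    filter_upwards with h
    simpa [abs_of_nonneg (sq_nonneg ‖h‖)] using hb h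
  exact h2.trans_isLittleO (Asymptotics.isLittleO_norm_pow_id one_lt_two)

lemma my_descent (L : ℝ) (hL : 0 < L) (F : E → ℝ) (G : E → E)
    (hlow : ∀ x y, F x + (inner ℝ (G x) (y - x) : ℝ) ≤ F y)
    (hup : ∀ x y, F y ≤ F x + (inner ℝ (G x) (y - x) : ℝ) + L * ‖y - x‖ ^ 2)
    (hlip : ∀ x y, ‖G y - G x‖ ≤ L * ‖y - x‖) :
    ∀ x y, F y ≤ F x + (inner ℝ (G x) (y - x) : ℝ) + L / 2 * ‖y - x‖ ^ 2 := by
  have hdiff : ∀ x : E, HasFDerivAt F (innerSL ℝ (G x)) x :=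
    my_hasFDerivAt L hL.le F G hlow hup
  intro x y
  set v := y - x with hv
  have hc : ∀ t : ℝ, HasDerivAt (fun t : ℝ => x + t • v) v t := by
    intro t
    simpa using ((hasDerivAt_id t).smul_const v).const_add x
  have hφ : ∀ t : ℝ, HasDerivAt (fun t : ℝ => F (x + t • v))
      ((inner ℝ (G (x + t • v)) v : ℝ)) t := by
    intro t
    have := (hdiff (x + t • v)).comp_hasDerivAt t (hc t)
    exact this
  set ψ : ℝ → ℝ := fun t => F (x + t • v) - t * (inner ℝ (G x) v : ℝ) - t ^ 2 * (L / 2 * ‖v‖ ^ 2)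
    with hψ
  have hψd : ∀ t : ℝ, HasDerivAt ψ
      ((inner ℝ (G (x + t • v)) v : ℝ) - (inner ℝ (G x) v : ℝ) - 2 * t * (L / 2 * ‖v‖ ^ 2)) t := by
    intro t
    have h1 : HasDerivAt (fun t : ℝ => t * (inner ℝ (G x) v : ℝ)) (inner ℝ (G x) v : ℝ) t := by
      simpa using (hasDerivAt_id t).mul_const (inner ℝ (G x) v : ℝ)
    have h2 : HasDerivAt (fun t : ℝ => t ^ 2 * (L / 2 * ‖v‖ ^ 2)) (2 * t * (L / 2 * ‖v‖ ^ 2)) t := by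
      simpa using (hasDerivAt_pow 2 t).mul_const (L / 2 * ‖v‖ ^ 2)
    exact ((hφ t).sub h1).sub h2
  have hanti : AntitoneOn ψ (Set.Icc 0 1) := by
    apply antitoneOn_of_deriv_nonpos (convex_Icc 0 1)
    · exact fun t _ => ((hψd t).differentiableAt).continuousAt.continuousWithinAt
    · exact fun t _ => ((hψd t).differentiableAt).differentiableWithinAt
    · intro t ht
      rw [interior_Icc] at ht
      rw [(hψd t).deriv]
      have hdot : (inner ℝ (G (x + t • v)) v : ℝ) - (inner ℝ (G x) v : ℝ)
          = (inner ℝ (G (x + t • v) - G x) v : ℝ) := by rw [inner_sub_left]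
      have hcs : (inner ℝ (G (x + t • v) - G x) v : ℝ) ≤ ‖G (x + t • v) - G x‖ * ‖v‖ :=
        real_inner_le_norm _ _
      have hlipb : ‖G (x + t • v) - G x‖ ≤ L * (t * ‖v‖) := by
        have := hlip x (x + t • v)
        simpa [norm_smul, abs_of_pos ht.1] using this
      have hvn : (0:ℝ) ≤ ‖v‖ := norm_nonneg _
      nlinarith [mul_le_mul_of_nonneg_right hlipb hvn,
        mul_le_mul_of_nonneg_right hcs (le_of_eq rfl)]
  have := hanti (Set.left_mem_Icc.2 zero_le_one) (Set.right_mem_Icc.2 zero_le_one) zero_le_one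
  simp only [hψ, zero_smul, add_zero, one_smul, zero_mul, sub_zero, one_mul, one_pow,
    zero_pow, mul_zero] at this
  have hy : x + v = y := by rw [hv]; abel
  rw [hy] at this
  linarith

lemma my_coco_half (C : ℝ) (hC : 0 < C) (F : E → ℝ) (G : E → E)
    (hconv : ∀ x y, F x + (inner ℝ (G x) (y - x) : ℝ) ≤ F y)
    (hdesc : ∀ x y, F y ≤ F x + (inner ℝ (G x) (y - x) : ℝ) + C / 2 * ‖y - x‖ ^ 2) :
    ∀ x y, F x + (inner ℝ (G x) (y - x) : ℝ) + 1 / (2 * C) * ‖G y - G x‖ ^ 2 ≤ F y := by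
  intro x y
  set w := G y - G x with hw
  set z := y - C⁻¹ • w with hz
  have h1 := hconv x z
  have h2 := hdesc y z
  have e1 : (inner ℝ (G x) (z - x) : ℝ)
      = (inner ℝ (G x) (y - x) : ℝ) - C⁻¹ * (inner ℝ (G x) w : ℝ) := by
    rw [hz]
    rw [show y - C⁻¹ • w - x = (y - x) - C⁻¹ • w by abel]
    rw [inner_sub_right, real_inner_smul_right]
  have e2 : z - y = -(C⁻¹ • w) := by rw [hz]; abel
  have e3 : (inner ℝ (G y) (z - y) : ℝ) = -(C⁻¹ * (inner ℝ (G y) w : ℝ)) := by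
    rw [e2, inner_neg_right, real_inner_smul_right]
  have e4 : ‖z - y‖ ^ 2 = C⁻¹ ^ 2 * ‖w‖ ^ 2 := by
    rw [e2, norm_neg, norm_smul, mul_pow, Real.norm_eq_abs, sq_abs]
  have e5 : (inner ℝ (G y) w : ℝ) - (inner ℝ (G x) w : ℝ) = ‖w‖ ^ 2 := by
    rw [← inner_sub_left, ← hw, real_inner_self_eq_norm_sq]
  rw [e1] at h1
  rw [e3, e4] at h2
  have hC2 : C / 2 * (C⁻¹ ^ 2 * ‖w‖ ^ 2) = 1 / (2 * C) * ‖w‖ ^ 2 := by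
    field_simp
  rw [hC2] at h2
  have key : C⁻¹ * ((inner ℝ (G y) w : ℝ) - (inner ℝ (G x) w : ℝ)) = C⁻¹ * ‖w‖ ^ 2 := by
    rw [e5]
  have hCi : C⁻¹ * ‖w‖^2 - 1/(2*C) * ‖w‖^2 = 1/(2*C) * ‖w‖^2 := by field_simp; ring
  nlinarith [h1, h2]

lemma my_coco (C : ℝ) (hC : 0 < C) (F : E → ℝ) (G : E → E)
    (hconv : ∀ x y, F x + (inner ℝ (G x) (y - x) : ℝ) ≤ F y)
    (hdesc : ∀ x y, F y ≤ F x + (inner ℝ (G x) (y - x) : ℝ) + C / 2 * ‖y - x‖ ^ 2) :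
    ∀ x y, 1 / C * ‖G y - G x‖ ^ 2 ≤ (inner ℝ (G y - G x) (y - x) : ℝ) := by
  intro x y
  have h1 := my_coco_half C hC F G hconv hdesc x y
  have h2 := my_coco_half C hC F G hconv hdesc y x
  rw [norm_sub_rev] at h2
  have e : (inner ℝ (G y - G x) (y - x) : ℝ)
      = (inner ℝ (G y) (y - x) : ℝ) - (inner ℝ (G x) (y - x) : ℝ) := inner_sub_left _ _ _
  have e2 : (inner ℝ (G y) (x - y) : ℝ) = -(inner ℝ (G y) (y - x) : ℝ) := by
    rw [show x - y = -(y-x) by abel, inner_neg_right]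
  rw [e2] at h2
  have : 1/(2*C) * ‖G y - G x‖^2 + 1/(2*C) * ‖G y - G x‖^2 = 1/C * ‖G y - G x‖^2 := by
    field_simp; ring
  linarith

lemma my_interp (μ L : ℝ) (hμ : 0 < μ) (hL : 0 < L) (hμL : μ ≤ L)
    (F : E → ℝ) (G : E → E)
    (hsc : ∀ x y, F x + (inner ℝ (G x) (y - x) : ℝ) + μ / 2 * ‖y - x‖ ^ 2 ≤ F y)
    (hlip : ∀ x y, ‖G y - G x‖ ≤ L * ‖y - x‖) :
    ∀ x y, μ * L * ‖y - x‖ ^ 2 + ‖G y - G x‖ ^ 2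
      ≤ (μ + L) * (inner ℝ (G y - G x) (y - x) : ℝ) := by
  have hmono : ∀ x y : E, μ * ‖y - x‖ ^ 2 ≤ (inner ℝ (G y - G x) (y - x) : ℝ) := by
    intro x y
    have h1 := hsc x y
    have h2 := hsc y x
    have e : (inner ℝ (G y) (x - y) : ℝ) = -(inner ℝ (G y) (y - x) : ℝ) := by
      rw [show x - y = -(y-x) by abel, inner_neg_right]
    rw [e, norm_sub_rev x y] at h2
    have e2 : (inner ℝ (G y - G x) (y - x) : ℝ)
        = (inner ℝ (G y) (y - x) : ℝ) - (inner ℝ (G x) (y - x) : ℝ) := inner_sub_left _ _ _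
    linarith
  intro x y
  rcases eq_or_lt_of_le hμL with heq | hlt
  · -- μ = L
    subst heq
    have h1 := hmono x y
    have h2 := hlip x y
    have h3 : ‖G y - G x‖ ^ 2 ≤ (μ * ‖y - x‖) ^ 2 :=
      pow_le_pow_left₀ (norm_nonneg _) h2 2
    nlinarith [norm_nonneg (G y - G x), norm_nonneg (y - x)]
  · -- μ < L
    have hlow : ∀ x y : E, F x + (inner ℝ (G x) (y - x) : ℝ) ≤ F y := by
      intro x y
      have := hsc x y
      nlinarith [sq_nonneg ‖y - x‖]
    have hup : ∀ x y : E, F y ≤ F x + (inner ℝ (G x) (y - x) : ℝ) + L * ‖y - x‖ ^ 2 := by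
      intro x y
      have h2 := hsc y x
      have e : (inner ℝ (G y) (x - y) : ℝ) = -(inner ℝ (G y) (y - x) : ℝ) := by
        rw [show x - y = -(y-x) by abel, inner_neg_right]
      rw [e, norm_sub_rev x y] at h2
      have ecs : (inner ℝ (G y - G x) (y - x) : ℝ) ≤ ‖G y - G x‖ * ‖y - x‖ :=
        real_inner_le_norm _ _
      have e2 : (inner ℝ (G y - G x) (y - x) : ℝ)
          = (inner ℝ (G y) (y - x) : ℝ) - (inner ℝ (G x) (y - x) : ℝ) := inner_sub_left _ _ _
      have h3 := hlip x y
      nlinarith [norm_nonneg (y - x), sq_nonneg ‖y - x‖]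
    have hdescF := my_descent L hL F G hlow hup hlip
    set h : E → ℝ := fun z => F z - μ / 2 * ‖z‖ ^ 2 with hh
    set Gh : E → E := fun z => G z - μ • z with hGh
    have hkey : ∀ x y : E, (inner ℝ (Gh x) (y - x) : ℝ)
        = (inner ℝ (G x) (y - x) : ℝ) - μ / 2 * ‖y‖^2 + μ / 2 * ‖x‖^2 + μ / 2 * ‖y - x‖^2 := by
      intro x y
      have hsq : ‖y - x‖ ^ 2 = ‖y‖^2 - 2 * (inner ℝ x y : ℝ) + ‖x‖^2 := by
        rw [@norm_sub_sq_real _ _ _ y x, real_inner_comm y x]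
      rw [hGh]
      simp only [inner_sub_left, real_inner_smul_left, inner_sub_right]
      rw [hsq]
      have hxx : (inner ℝ x x : ℝ) = ‖x‖^2 := real_inner_self_eq_norm_sq x
      rw [hxx]; ring
    have hconvh : ∀ x y : E, h x + (inner ℝ (Gh x) (y - x) : ℝ) ≤ h y := by
      intro x y
      have := hsc x y
      rw [hkey]; simp only [hh]; linarith
    have hdesch : ∀ x y : E, h y ≤ h x + (inner ℝ (Gh x) (y - x) : ℝ) + (L - μ) / 2 * ‖y - x‖ ^ 2 := by
      intro x y
      have := hdescF x y
      rw [hkey]; simp only [hh]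
      have : F y ≤ F x + (inner ℝ (G x) (y - x) : ℝ) + L / 2 * ‖y - x‖ ^ 2 := this
      linarith [this]
    have hcocoh := my_coco (L - μ) (by linarith) h Gh hconvh hdesch x y
    have e1 : Gh y - Gh x = (G y - G x) - μ • (y - x) := by
      rw [hGh]; simp only; rw [smul_sub]; abel
    rw [e1] at hcocoh
    set w := G y - G x with hw
    set u := y - x with hu
    have e2 : ‖w - μ • u‖ ^ 2 = ‖w‖^2 - 2 * μ * (inner ℝ w u : ℝ) + μ^2 * ‖u‖^2 := by
      rw [@norm_sub_sq_real _ _ _ w (μ • u), real_inner_smul_right, norm_smul,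
        Real.norm_eq_abs, abs_of_pos hμ, mul_pow]
      ring
    have e3 : (inner ℝ (w - μ • u) u : ℝ) = (inner ℝ w u : ℝ) - μ * ‖u‖^2 := by
      rw [inner_sub_left, real_inner_smul_left, real_inner_self_eq_norm_sq]
    rw [e2, e3] at hcocoh
    have hLμ : (0:ℝ) < L - μ := by linarith
    have := mul_le_mul_of_nonneg_left hcocoh hLμ.le
    rw [mul_assoc, ← mul_assoc (L-μ) (1/(L-μ)), mul_one_div, div_self hLμ.ne'] at this
    nlinarith [this]

end Helpers

theorem dgd_average_estimate
    (m d : ℕ) (hm : 0 < m) (μ L : ℝ) (hμ : 0 < μ) (hL : 0 < L)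
    (f : Fin m → EuclideanSpace ℝ (Fin d) → ℝ)
    (g : Fin m → EuclideanSpace ℝ (Fin d) → EuclideanSpace ℝ (Fin d))
    (hsmooth : ∀ i x y, ‖g i y - g i x‖ ≤ L * ‖y - x‖)
    (G : EuclideanSpace ℝ (Fin d) → EuclideanSpace ℝ (Fin d))
    (hG : ∀ z, G z = (m : ℝ)⁻¹ • ∑ i, g i z)
    (hsc : ∀ x y, (m : ℝ)⁻¹ * ∑ i, f i y ≥
      (m : ℝ)⁻¹ * ∑ i, f i x + (inner ℝ (G x) (y - x) : ℝ) + μ / 2 * ‖y - x‖^2)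
    (xstar : EuclideanSpace ℝ (Fin d))
    (hmin : ∀ y, (m : ℝ)⁻¹ * ∑ i, f i xstar ≤ (m : ℝ)⁻¹ * ∑ i, f i y)
    (hG0 : G xstar = 0)
    (α : ℕ → ℝ) (hα : ∀ t, 0 < α t) (hα2 : ∀ t, α t ≤ 2 / (μ + L))
    (x : ℕ → Fin m → EuclideanSpace ℝ (Fin d))
    (xbar : ℕ → EuclideanSpace ℝ (Fin d))
    (hxbar : ∀ t, xbar t = (m : ℝ)⁻¹ • ∑ i, x t i)
    (hrec : ∀ t, xbar (t + 1) = xbar t - (α t / m) • ∑ i, g i (x t i)) :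
    ∀ t, ‖xbar (t + 1) - xstar‖ ≤
      (1 - (μ * L / (μ + L)) * α t) * ‖xbar t - xstar‖
        + L * α t / Real.sqrt m * Real.sqrt (∑ i, ‖x t i - xbar t‖^2) := by
  intro t
  have hμL0 : (0:ℝ) < μ + L := by linarith
  have hs0 : 0 < α t := hα t
  have h1mη : 0 ≤ 1 - μ * L / (μ + L) * α t := by
    have h2 := hα2 t
    have key : μ * L / (μ + L) * α t ≤ μ * L / (μ + L) * (2 / (μ + L)) := by
      apply mul_le_mul_of_nonneg_left h2 (by positivity)
    have key2 : μ * L / (μ + L) * (2 / (μ + L)) ≤ 1 / 2 := by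
      rw [div_mul_div_comm, div_le_div_iff₀ (by positivity) (by norm_num)]
      nlinarith [sq_nonneg (μ - L)]
    linarith
  -- second big term nonneg
  have hsqrt_nonneg : 0 ≤ L * α t / Real.sqrt m * Real.sqrt (∑ i, ‖x t i - xbar t‖^2) := by
    positivity
  rcases Nat.eq_zero_or_pos d with hd | hd
  · subst hd
    have : xbar (t+1) - xstar = 0 := Subsingleton.elim _ _
    rw [this, norm_zero]
    have := mul_nonneg h1mη (norm_nonneg (xbar t - xstar))
    linarith
  -- main case
  set F : EuclideanSpace ℝ (Fin d) → ℝ := fun w => (m:ℝ)⁻¹ * ∑ i, f i w with hF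
  have hsc' : ∀ a b, F a + (inner ℝ (G a) (b - a) : ℝ) + μ / 2 * ‖b - a‖ ^ 2 ≤ F b :=
    fun a b => hsc a b
  have hGlip : ∀ a b : EuclideanSpace ℝ (Fin d), ‖G b - G a‖ ≤ L * ‖b - a‖ := by
    intro a b
    rw [hG, hG, ← smul_sub, ← Finset.sum_sub_distrib, norm_smul, Real.norm_eq_abs,
      abs_of_nonneg (by positivity : (0:ℝ) ≤ (m:ℝ)⁻¹)]
    have h1 : ‖∑ i, (g i b - g i a)‖ ≤ ∑ i : Fin m, L * ‖b - a‖ := by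
      refine (norm_sum_le _ _).trans ?_
      exact Finset.sum_le_sum fun i _ => hsmooth i a b
    have h2 : ∑ _i : Fin m, L * ‖b - a‖ = (m:ℝ) * (L * ‖b - a‖) := by
      rw [Finset.sum_const, Finset.card_univ, Fintype.card_fin, nsmul_eq_mul]
    have hm0 : (m:ℝ) ≠ 0 := Nat.cast_ne_zero.2 hm.ne'
    calc (m:ℝ)⁻¹ * ‖∑ i, (g i b - g i a)‖
        ≤ (m:ℝ)⁻¹ * ((m:ℝ) * (L * ‖b - a‖)) := by
          rw [← h2]; exact mul_le_mul_of_nonneg_left h1 (by positivity)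
      _ = L * ‖b - a‖ := by field_simp
  -- μ ≤ L
  have hμL : μ ≤ L := by
    set e : EuclideanSpace ℝ (Fin d) := EuclideanSpace.single ⟨0, hd⟩ (1:ℝ) with he
    have hne : ‖e - 0‖ = 1 := by
      rw [sub_zero, he, EuclideanSpace.norm_single, norm_one]
    have h1 := my_mono μ F G hsc' 0 e
    have h2 : (inner ℝ (G e - G 0) (e - 0) : ℝ) ≤ ‖G e - G 0‖ * ‖e - 0‖ := real_inner_le_norm _ _
    have h3 := hGlip 0 e
    rw [hne] at h1 h2 h3
    nlinarith
  have hinterp := my_interp μ L hμ hL hμL F G hsc' hGlip xstar (xbar t)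
  rw [hG0, sub_zero] at hinterp
  set z := xbar t
  set v := xbar t - xstar with hv
  set s := α t with hsdef
  -- contraction
  have hcontr : ‖v - s • G z‖ ≤ (1 - μ * L / (μ + L) * s) * ‖v‖ := by
    set a := ‖v‖ with ha
    set b := ‖G z‖ with hb
    set c : ℝ := inner ℝ (G z) v with hc
    have hexp : ‖v - s • G z‖ ^ 2 = a^2 - 2 * s * c + s^2 * b^2 := by
      rw [@norm_sub_sq_real _ _ _ v (s • G z), real_inner_smul_right, norm_smul,
        Real.norm_eq_abs, abs_of_pos hs0, mul_pow, real_inner_comm]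
      ring
    have hA : 2 * s / (μ + L) * (μ * L * a^2 + b^2) ≤ 2 * s * c := by
      have := mul_le_mul_of_nonneg_left hinterp (by positivity : (0:ℝ) ≤ 2 * s / (μ + L))
      calc 2 * s / (μ + L) * (μ * L * a^2 + b^2)
          ≤ 2 * s / (μ + L) * ((μ + L) * c) := this
        _ = 2 * s * c := by field_simp
    have hB : s^2 * b^2 ≤ 2 * s / (μ + L) * b^2 := by
      apply mul_le_mul_of_nonneg_right _ (sq_nonneg _)
      have h2 := hα2 t
      calc s^2 = s * s := sq s
        _ ≤ s * (2 / (μ + L)) := mul_le_mul_of_nonneg_left h2 hs0.le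
        _ = 2 * s / (μ + L) := by ring
    have hη : 2 * s / (μ + L) * (μ * L * a^2) = 2 * (μ * L / (μ + L)) * s * a^2 := by
      field_simp
    have hsq : ‖v - s • G z‖ ^ 2 ≤ ((1 - μ * L / (μ + L) * s) * a) ^ 2 := by
      have hexpand : ((1 - μ * L / (μ + L) * s) * a) ^ 2
          = a^2 - 2 * (μ * L / (μ + L)) * s * a^2
            + (μ * L / (μ + L))^2 * s^2 * a^2 := by ring
      nlinarith [sq_nonneg ((μ * L / (μ + L)) * s * a)]
    have h1 : 0 ≤ ‖v - s • G z‖ := norm_nonneg _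
    have h2 : 0 ≤ (1 - μ * L / (μ + L) * s) * a := mul_nonneg h1mη (norm_nonneg _)
    calc ‖v - s • G z‖ = Real.sqrt (‖v - s • G z‖ ^ 2) := (Real.sqrt_sq h1).symm
      _ ≤ Real.sqrt (((1 - μ * L / (μ + L) * s) * a) ^ 2) := Real.sqrt_le_sqrt hsq
      _ = (1 - μ * L / (μ + L) * s) * a := Real.sqrt_sq h2
  -- decomposition
  have hdecomp : xbar (t+1) - xstar
      = (v - s • G z) - (s / m) • ∑ i, (g i (x t i) - g i z) := by
    rw [hrec t, hG, Finset.sum_sub_distrib, hv]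
    rw [div_eq_mul_inv s (m:ℝ)]
    module
  rw [hdecomp]
  have htri : ‖(v - s • G z) - (s / m) • ∑ i, (g i (x t i) - g i z)‖
      ≤ ‖v - s • G z‖ + ‖(s / m) • ∑ i, (g i (x t i) - g i z)‖ := norm_sub_le _ _
  -- bound consensus term
  have hcons : ‖(s / m) • ∑ i, (g i (x t i) - g i z)‖
      ≤ L * s / Real.sqrt m * Real.sqrt (∑ i, ‖x t i - z‖^2) := by
    have hm0 : (0:ℝ) < (m:ℝ) := Nat.cast_pos.2 hm
    rw [norm_smul, Real.norm_eq_abs, abs_of_pos (by positivity : (0:ℝ) < s / m)]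
    have h1 : ‖∑ i, (g i (x t i) - g i z)‖ ≤ ∑ i, L * ‖x t i - z‖ := by
      refine (norm_sum_le _ _).trans ?_
      exact Finset.sum_le_sum fun i _ => hsmooth i z (x t i)
    have h2 : ∑ i, L * ‖x t i - z‖ = L * ∑ i, ‖x t i - z‖ := by
      rw [Finset.mul_sum]
    have hcs : ∑ i, ‖x t i - z‖ ≤ Real.sqrt m * Real.sqrt (∑ i, ‖x t i - z‖^2) := by
      have hsq := sq_sum_le_card_mul_sum_sq (s := Finset.univ)
        (f := fun i : Fin m => ‖x t i - z‖)
      rw [Finset.card_univ, Fintype.card_fin] at hsq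
      have h0 : 0 ≤ ∑ i, ‖x t i - z‖ := Finset.sum_nonneg fun i _ => norm_nonneg _
      calc ∑ i, ‖x t i - z‖ = Real.sqrt ((∑ i, ‖x t i - z‖)^2) := (Real.sqrt_sq h0).symm
        _ ≤ Real.sqrt ((m:ℝ) * ∑ i, ‖x t i - z‖^2) := Real.sqrt_le_sqrt (by exact_mod_cast hsq)
        _ = Real.sqrt m * Real.sqrt (∑ i, ‖x t i - z‖^2) := Real.sqrt_mul (by positivity) _
    have hmm : Real.sqrt m * Real.sqrt m = (m:ℝ) := Real.mul_self_sqrt hm0.le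
    have hfinal : s / m * (L * (Real.sqrt m * Real.sqrt (∑ i, ‖x t i - z‖^2)))
        = L * s / Real.sqrt m * Real.sqrt (∑ i, ‖x t i - z‖^2) := by
      have hsm : Real.sqrt m ≠ 0 := by positivity
      set S := Real.sqrt (∑ i, ‖x t i - z‖^2)
      set r := Real.sqrt m
      rw [← hmm]
      field_simp
    calc s / m * ‖∑ i, (g i (x t i) - g i z)‖
        ≤ s / m * (L * ∑ i, ‖x t i - z‖) := by
          rw [← h2]; exact mul_le_mul_of_nonneg_left h1 (by positivity)
      _ ≤ s / m * (L * (Real.sqrt m * Real.sqrt (∑ i, ‖x t i - z‖^2))) := by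
          apply mul_le_mul_of_nonneg_left _ (by positivity)
          exact mul_le_mul_of_nonneg_left hcs hL.le
      _ = L * s / Real.sqrt m * Real.sqrt (∑ i, ‖x t i - z‖^2) := hfinal
  calc ‖(v - s • G z) - (s / m) • ∑ i, (g i (x t i) - g i z)‖
      ≤ ‖v - s • G z‖ + ‖(s / m) • ∑ i, (g i (x t i) - g i z)‖ := htri
    _ ≤ (1 - μ * L / (μ + L) * s) * ‖v‖
        + L * s / Real.sqrt m * Real.sqrt (∑ i, ‖x t i - z‖^2) := add_le_add hcontr hcons
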